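/- For an odd prime p, the action of the unit group (Z/p^3)^* on Z/p^3 by multiplication by squares (k acting as x ↦ k^2 x) has exactly 7 orbits. -/

import Mathlib

section Aux
variable {p : ℕ}

private lemma zp_p3_zero (hp : p.Prime) : ((p : ZMod (p^3)))^3 = 0 := by
  have : ((p^3 : ℕ) : ZMod (p^3)) = 0 := ZMod.natCast_self _
  push_cast at this; exact this

private lemma zp_p2_ne (hp : p.Prime) : ((p : ZMod (p^3)))^2 ≠ 0 := by
  intro h
  have : ((p^2 : ℕ) : ZMod (p^3)) = 0 := by push_cast; exact h
  rw [ZMod.natCast_eq_zero_iff] at this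
  have := (Nat.pow_dvd_pow_iff_le_right hp.one_lt).1 this
  omega

private lemma zp_rep_ne_zero (hp : p.Prime) (ε : (ZMod (p^3))ˣ) {k : ℕ} (hk : k ≤ 2) :
    (ε : ZMod (p^3)) * (p : ZMod (p^3))^k ≠ 0 := by
  intro h
  rw [Units.mul_right_eq_zero] at h
  have h2 : ((p : ZMod (p^3)))^2 = 0 := by
    have : ((p : ZMod (p^3)))^k * ((p : ZMod (p^3)))^(2-k) = 0 := by rw [h, zero_mul]
    rwa [← pow_add, Nat.add_sub_cancel' hk] at this
  exact zp_p2_ne hp h2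

/-- divide: if `p^k * y = 0` then `y = p^(3-k) * z`. -/
private lemma zp_factor (hp : p.Prime) {k : ℕ} (hk : k ≤ 3) {y : ZMod (p^3)}
    (h : (p : ZMod (p^3))^k * y = 0) : ∃ z : ZMod (p^3), y = (p : ZMod (p^3))^(3-k) * z := by
  haveI : NeZero (p^3) := ⟨pow_ne_zero 3 hp.ne_zero⟩
  have hy : ((y.val : ℕ) : ZMod (p^3)) = y := ZMod.natCast_rightInverse y
  have h0 : ((p^k * y.val : ℕ) : ZMod (p^3)) = 0 := by push_cast; rw [hy]; exact h
  rw [ZMod.natCast_eq_zero_iff] at h0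
  have h1 : p^k * p^(3-k) ∣ p^k * y.val := by
    rw [← pow_add, Nat.add_sub_cancel' hk]; exact h0
  have := (mul_dvd_mul_iff_left (a := p^k) (pow_ne_zero k hp.ne_zero)).1 h1
  obtain ⟨z, hz⟩ := this
  exact ⟨(z : ZMod (p^3)), by rw [← hy, hz]; push_cast; ring⟩

/-- same valuation. -/
private lemma zp_val_eq (hp : p.Prime) (ε ε' : (ZMod (p^3))ˣ) {j k : ℕ} (hj : j ≤ 2) (hk : k ≤ 2)
    (h : (ε : ZMod (p^3)) * (p : ZMod (p^3))^j = (ε' : ZMod (p^3)) * (p : ZMod (p^3))^k) :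
    j = k := by
  by_contra hne
  have key : ∀ (a b : (ZMod (p^3))ˣ) {s t : ℕ}, s ≤ 2 → t ≤ 2 → s < t →
      (a : ZMod (p^3)) * (p : ZMod (p^3))^s ≠ (b : ZMod (p^3)) * (p : ZMod (p^3))^t := by
    intro a b s t hs ht hst heq
    have h2 : (a : ZMod (p^3)) * (p : ZMod (p^3))^2
        = (b : ZMod (p^3)) * ((p : ZMod (p^3))^3 * (p : ZMod (p^3))^(t-s-1)) := by
      have := congrArg (· * (p : ZMod (p^3))^(2-s)) heq
      simp only [mul_assoc, ← pow_add] at this ⊢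
      rw [Nat.add_sub_cancel' hs] at this
      rw [this]
      congr 2
      omega
    rw [zp_p3_zero hp, zero_mul, mul_zero, Units.mul_right_eq_zero] at h2
    exact zp_p2_ne hp h2
  rcases Nat.lt_or_ge j k with hlt | hge
  · exact key ε ε' hj hk hlt h
  · exact key ε' ε hk hj (by omega) h.symm
end Aux

section Aux2
variable {p : ℕ}

private lemma zp_unit_square_of_cong_one (hp : p.Prime) (hodd : Odd p) (η : (ZMod (p^3))ˣ)
    (h : (p : ZMod (p^3)) ∣ ((η : ZMod (p^3)) - 1)) : IsSquare η := by
  have hd : ((p : ZMod (p^3)))^(2+1) ∣ (η : ZMod (p^3))^(p^2) - 1^(p^2) :=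
    dvd_sub_pow_of_dvd_sub h 2
  have hz : ((p : ZMod (p^3)))^(2+1) = 0 := by
    have : ((p^3 : ℕ) : ZMod (p^3)) = 0 := ZMod.natCast_self _
    push_cast at this; exact this
  rw [hz, zero_dvd_iff, one_pow, sub_eq_zero] at hd
  have hu : η^(p^2) = 1 := by
    ext
    rw [Units.val_pow_eq_pow_val, hd, Units.val_one]
  obtain ⟨m, hm⟩ : Even (p^2 + 1) := by
    have := (hodd.pow (n := 2)); exact this.add_one
  refine ⟨η^m, ?_⟩
  rw [← pow_add, ← hm, pow_add, hu, one_mul, pow_one]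

/-- units that become equal after multiplying by `p^k`, `k ≤ 2`, differ by a square. -/
private lemma zp_sq_class (hp : p.Prime) (hodd : Odd p) (c d : (ZMod (p^3))ˣ) {k : ℕ} (hk : k ≤ 2)
    (h : (c : ZMod (p^3)) * (p : ZMod (p^3))^k = (d : ZMod (p^3)) * (p : ZMod (p^3))^k) :
    IsSquare (c⁻¹ * d) := by
  have h0 : (p : ZMod (p^3))^k * ((d : ZMod (p^3)) - c) = 0 := by
    rw [mul_sub]; rw [mul_comm ((p : ZMod (p^3))^k)] at *; rw [← h]; ring
  obtain ⟨z, hz⟩ := zp_factor hp (by omega) h0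
  apply zp_unit_square_of_cong_one hp hodd
  have hval : ((c⁻¹ * d : (ZMod (p^3))ˣ) : ZMod (p^3)) - 1
      = (c⁻¹ : (ZMod (p^3))ˣ) * ((d : ZMod (p^3)) - c) := by
    push_cast
    rw [mul_sub]
    congr 1
    rw [Units.inv_mul]
  rw [hval, hz]
  refine ⟨(p : ZMod (p^3))^(2-k) * ((c⁻¹ : (ZMod (p^3))ˣ) : ZMod (p^3)) * z, ?_⟩
  have : (3 - k) = (2 - k) + 1 := by omega
  rw [this, pow_add, pow_one]
  ring

private lemma zp_units_sq_eq_one (hp : p.Prime) (hodd : Odd p) (x : (ZMod (p^3))ˣ)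
    (h : x^2 = 1) : x = 1 ∨ x = -1 := by
  haveI : NeZero (p^3) := ⟨pow_ne_zero 3 hp.ne_zero⟩
  set a : ℤ := ((x : ZMod (p^3)).val : ℤ) with ha
  have hax : ((a : ℤ) : ZMod (p^3)) = (x : ZMod (p^3)) := by
    rw [ha]; push_cast; exact ZMod.natCast_rightInverse _
  have hsq : (((a - 1) * (a + 1) : ℤ) : ZMod (p^3)) = 0 := by
    push_cast
    rw [hax]
    have hx2 : (x : ZMod (p^3))^2 = 1 := by
      rw [← Units.val_pow_eq_pow_val, h, Units.val_one]
    ring_nf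
    ring_nf at hx2
    rw [hx2]; ring
  rw [ZMod.intCast_zmod_eq_zero_iff_dvd] at hsq
  push_cast at hsq
  have hpz : Prime (p : ℤ) := Nat.prime_iff_prime_int.1 hp
  have hdvd : (p : ℤ) ∣ (a - 1) * (a + 1) := dvd_trans (dvd_pow_self _ (by norm_num)) hsq
  have hnot2 : ¬ ((p : ℤ) ∣ (a - 1) ∧ (p : ℤ) ∣ (a + 1)) := by
    rintro ⟨h1, h2⟩
    have : (p : ℤ) ∣ 2 := by have := dvd_sub h2 h1; simpa using this
    have h2' : (p : ℕ) ∣ 2 := by exact_mod_cast this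
    have := (Nat.prime_dvd_prime_iff_eq hp Nat.prime_two).1 h2'
    rw [this] at hodd
    simp [Nat.odd_iff] at hodd
  rcases hpz.dvd_mul.1 hdvd with h1 | h1
  · left
    have hcop : IsCoprime ((p : ℤ)^3) (a + 1) := by
      apply IsCoprime.pow_left
      rw [hpz.coprime_iff_not_dvd]
      intro h2; exact hnot2 ⟨h1, h2⟩
    have : ((p : ℤ))^3 ∣ a - 1 := hcop.dvd_of_dvd_mul_right hsq
    have : (((a - 1 : ℤ)) : ZMod (p^3)) = 0 := by
      rw [ZMod.intCast_zmod_eq_zero_iff_dvd]; push_cast; exact this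
    push_cast at this
    rw [hax, sub_eq_zero] at this
    ext; rw [this, Units.val_one]
  · right
    have hcop : IsCoprime ((p : ℤ)^3) (a - 1) := by
      apply IsCoprime.pow_left
      rw [hpz.coprime_iff_not_dvd]
      intro h2; exact hnot2 ⟨h2, h1⟩
    have : ((p : ℤ))^3 ∣ a + 1 := hcop.dvd_of_dvd_mul_left hsq
    have : (((a + 1 : ℤ)) : ZMod (p^3)) = 0 := by
      rw [ZMod.intCast_zmod_eq_zero_iff_dvd]; push_cast; exact this
    push_cast at this
    rw [hax] at this
    have : (x : ZMod (p^3)) = -1 := by linear_combination this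
    ext; rw [this]; simp

end Aux2

section Aux3
variable {p : ℕ}

private lemma zp_neg_one_ne_one (hp : p.Prime) (hodd : Odd p) :
    (-1 : (ZMod (p^3))ˣ) ≠ 1 := by
  intro h
  have h1 : ((-1 : (ZMod (p^3))ˣ) : ZMod (p^3)) = 1 := by rw [h]; rfl
  rw [Units.val_neg, Units.val_one] at h1
  have h2 : ((2 : ℕ) : ZMod (p^3)) = 0 := by
    push_cast
    linear_combination -h1
  rw [ZMod.natCast_eq_zero_iff] at h2
  have hle := Nat.le_of_dvd (by norm_num) h2
  have h8 : 2^3 ≤ p^3 := Nat.pow_le_pow_left hp.two_le 3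
  omega
end Aux3

section Aux4
variable {p : ℕ}

private lemma zp_coset (hp : p.Prime) (hodd : Odd p) :
    (∃ u : (ZMod (p^3))ˣ, ¬ IsSquare u) ∧
    ∀ a b : (ZMod (p^3))ˣ, ¬ IsSquare a → ¬ IsSquare b → IsSquare (a⁻¹ * b) := by
  haveI : NeZero (p^3) := ⟨pow_ne_zero 3 hp.ne_zero⟩
  set G := (ZMod (p^3))ˣ
  set φ : G →* G := powMonoidHom 2 with hφdef
  have hsq : ∀ g : G, IsSquare g ↔ g ∈ φ.range := by
    intro g
    constructor
    · rintro ⟨r, hr⟩; exact ⟨r, by simp [hφdef, powMonoidHom_apply, sq, hr]⟩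
    · rintro ⟨r, hr⟩; exact ⟨r, by simp [hφdef, powMonoidHom_apply, sq] at hr; rw [← hr]⟩
  have hker : ∀ x : G, x ∈ φ.ker ↔ x = 1 ∨ x = -1 := by
    intro x
    rw [MonoidHom.mem_ker]
    constructor
    · intro h; exact zp_units_sq_eq_one hp hodd x h
    · rintro (h | h) <;> simp [hφdef, powMonoidHom_apply, h] <;> exact neg_one_sq
  have hcardker : Nat.card φ.ker = 2 := by
    rw [Nat.card_eq_two_iff]
    refine ⟨⟨1, (hker 1).2 (Or.inl rfl)⟩, ⟨-1, (hker (-1)).2 (Or.inr rfl)⟩, ?_, ?_⟩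
    · intro h
      exact zp_neg_one_ne_one hp hodd (Subtype.ext_iff.1 h).symm
    · apply Set.eq_univ_iff_forall.2
      intro z
      rcases (hker z.1).1 z.2 with h | h
      · left; exact Subtype.ext h
      · right; simp only [Set.mem_singleton_iff]; exact Subtype.ext h
  have hquot : Nat.card (G ⧸ φ.ker) = Nat.card φ.range :=
    Nat.card_congr (QuotientGroup.quotientKerEquivRange φ).toEquiv
  have hc1 : Nat.card G = Nat.card (G ⧸ φ.ker) * 2 := by
    rw [Subgroup.card_eq_card_quotient_mul_card_subgroup φ.ker, hcardker]
  have hc2 : Nat.card G = Nat.card (G ⧸ φ.range) * Nat.card φ.range :=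
    Subgroup.card_eq_card_quotient_mul_card_subgroup φ.range
  have hpos : 0 < Nat.card φ.range := Nat.card_pos
  have hQ2 : Nat.card (G ⧸ φ.range) = 2 := by
    have : Nat.card (G ⧸ φ.range) * Nat.card φ.range = 2 * Nat.card φ.range := by
      rw [← hc2, hc1, hquot]; ring
    exact Nat.eq_of_mul_eq_mul_right hpos this
  obtain ⟨y, hy1, hy2⟩ := (Nat.card_eq_two_iff' (1 : G ⧸ φ.range)).1 hQ2
  constructor
  · obtain ⟨u, hu⟩ := QuotientGroup.mk_surjective y
    refine ⟨u, fun hsqu => ?_⟩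
    have : (u : G ⧸ φ.range) = 1 := (QuotientGroup.eq_one_iff u).2 ((hsq u).1 hsqu)
    rw [hu] at this
    exact hy1 this
  · intro a b ha hb
    have hane : (a : G ⧸ φ.range) ≠ 1 := fun h => ha ((hsq a).2 ((QuotientGroup.eq_one_iff a).1 h))
    have hbne : (b : G ⧸ φ.range) ≠ 1 := fun h => hb ((hsq b).2 ((QuotientGroup.eq_one_iff b).1 h))
    have : (a : G ⧸ φ.range) = (b : G ⧸ φ.range) := by
      rw [hy2 _ hane, hy2 _ hbne]
    exact (hsq _).2 (QuotientGroup.eq.1 this)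

end Aux4

section Aux5
variable {p : ℕ}

private lemma zp_unit_act (δ ε : (ZMod (p^3))ˣ) (t : ZMod (p^3)) :
    ((δ : ZMod (p^3)))^2 * ((ε : ZMod (p^3)) * t) = ((δ^2 * ε : (ZMod (p^3))ˣ) : ZMod (p^3)) * t := by
  rw [Units.val_mul, Units.val_pow_eq_pow_val]; ring

private lemma zp_decomp (hp : p.Prime) (x : ZMod (p^3)) (hx : x ≠ 0) :
    ∃ (ε : (ZMod (p^3))ˣ) (k : ℕ), k ≤ 2 ∧ x = (ε : ZMod (p^3)) * (p : ZMod (p^3))^k := by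
  haveI : NeZero (p^3) := ⟨pow_ne_zero 3 hp.ne_zero⟩
  have hm0 : x.val ≠ 0 := fun h => hx ((ZMod.val_eq_zero x).1 h)
  have hdvd : p^(x.val.factorization p) ∣ x.val := Nat.ordProj_dvd x.val p
  have hlt : x.val < p^3 := ZMod.val_lt x
  have hk2 : x.val.factorization p ≤ 2 := by
    have h1 : p^(x.val.factorization p) ≤ x.val := Nat.le_of_dvd (Nat.pos_of_ne_zero hm0) hdvd
    have h2 : p^(x.val.factorization p) < p^3 := lt_of_le_of_lt h1 hlt
    have := (Nat.pow_lt_pow_iff_right hp.one_lt).1 h2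
    omega
  have hc : ¬ p ∣ ordCompl[p] x.val := Nat.not_dvd_ordCompl hp hm0
  have hcop : Nat.Coprime (ordCompl[p] x.val) (p^3) :=
    Nat.Coprime.pow_right 3 (Nat.Coprime.symm ((Nat.Prime.coprime_iff_not_dvd hp).2 hc))
  refine ⟨ZMod.unitOfCoprime _ hcop, x.val.factorization p, hk2, ?_⟩
  have hx2 : ((x.val : ℕ) : ZMod (p^3)) = x := ZMod.natCast_rightInverse x
  have hme : p ^ (x.val.factorization p) * ordCompl[p] x.val = x.val :=
    Nat.ordProj_mul_ordCompl_eq_self x.val p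
  calc x = ((x.val : ℕ) : ZMod (p^3)) := hx2.symm
    _ = ((p^(x.val.factorization p) * ordCompl[p] x.val : ℕ) : ZMod (p^3)) := by rw [hme]
    _ = _ := by rw [ZMod.coe_unitOfCoprime]; push_cast; ring

private lemma zp_orb (hp : p.Prime) (hodd : Odd p) (u : (ZMod (p^3))ˣ) (hu : ¬ IsSquare u)
    {a b j k : ℕ} (ha : a ≤ 1) (hb : b ≤ 1) (hj : j ≤ 2) (hk : k ≤ 2) (δ : (ZMod (p^3))ˣ)
    (h : ((u^a : (ZMod (p^3))ˣ) : ZMod (p^3)) * (p : ZMod (p^3))^j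
        = ((δ : ZMod (p^3)))^2 * (((u^b : (ZMod (p^3))ˣ) : ZMod (p^3)) * (p : ZMod (p^3))^k)) :
    a = b ∧ j = k := by
  rw [zp_unit_act] at h
  have hjk := zp_val_eq hp (u^a) (δ^2*u^b) hj hk h
  subst hjk
  have hS : IsSquare ((u^a)⁻¹ * (δ^2*u^b)) := zp_sq_class hp hodd _ _ hj h
  have hS2 : IsSquare ((u^a)⁻¹ * (δ^2*u^b) * (δ^2)⁻¹) :=
    hS.mul (isSquare_inv.2 ⟨δ, pow_two δ⟩)
  have heq : (u^a)⁻¹ * (δ^2*u^b) * (δ^2)⁻¹ = u^b * (u^a)⁻¹ := by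
    simp [mul_comm, mul_left_comm, mul_assoc, mul_inv_cancel_left, inv_mul_cancel_left]
  rw [heq] at hS2
  interval_cases a <;> interval_cases b <;> simp_all [isSquare_inv]

private def zrep (p : ℕ) (u : (ZMod (p^3))ˣ) (q : Fin 2 × Fin 3) : ZMod (p^3) :=
  ((u^(q.1 : ℕ) : (ZMod (p^3))ˣ) : ZMod (p^3)) * (p : ZMod (p^3))^(q.2 : ℕ)

end Aux5

/-- For an odd prime `p`, the action of the unit group `(Z/p³)ˣ` on `Z/p³` in
which a unit `k` acts by `x ↦ k² x` has exactly `7` orbits: there is a set of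
`7` representatives meeting every orbit exactly once. -/
theorem square_action_on_zmod_p_cubed_orbits (p : ℕ) (hp : p.Prime) (hodd : Odd p) :
    ∃ s : Finset (ZMod (p ^ 3)), s.card = 7 ∧
      ∀ x : ZMod (p ^ 3), ∃! y, y ∈ s ∧
        ∃ k : (ZMod (p ^ 3))ˣ, y = ((k : ZMod (p ^ 3))) ^ 2 * x := by
  haveI : NeZero (p^3) := ⟨pow_ne_zero 3 hp.ne_zero⟩
  obtain ⟨⟨u, hu⟩, hcoset⟩ := zp_coset hp hodd
  have hfinj : Function.Injective (zrep p u) := by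
    intro q q' h
    have h' : ((u^(q.1 : ℕ) : (ZMod (p^3))ˣ) : ZMod (p^3)) * (p : ZMod (p^3))^(q.2 : ℕ)
        = (((1 : (ZMod (p^3))ˣ) : ZMod (p^3)))^2
          * (((u^(q'.1 : ℕ) : (ZMod (p^3))ˣ) : ZMod (p^3)) * (p : ZMod (p^3))^(q'.2 : ℕ)) := by
      simpa [Units.val_one, zrep] using h
    obtain ⟨h1, h2⟩ := zp_orb hp hodd u hu (by omega : (q.1 : ℕ) ≤ 1) (by omega : (q'.1 : ℕ) ≤ 1)
      (by omega : (q.2 : ℕ) ≤ 2) (by omega : (q'.2 : ℕ) ≤ 2) 1 h'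
    exact Prod.ext (Fin.ext h1) (Fin.ext h2)
  have hf0 : ∀ q : Fin 2 × Fin 3, zrep p u q ≠ 0 := fun q =>
    zp_rep_ne_zero hp _ (by omega : (q.2 : ℕ) ≤ 2)
  refine ⟨insert 0 (Finset.image (zrep p u) Finset.univ), ?_, ?_⟩
  · rw [Finset.card_insert_of_notMem, Finset.card_image_of_injective _ hfinj]
    · simp
    · intro hmem
      obtain ⟨q, -, hq⟩ := Finset.mem_image.1 hmem
      exact hf0 q hq
  · intro x
    by_cases hx : x = 0
    · subst hx
      refine ⟨0, ⟨Finset.mem_insert_self _ _, 1, by simp⟩, ?_⟩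
      rintro y' ⟨-, k, hk⟩
      simpa using hk
    · obtain ⟨ε, k, hk2, hxe⟩ := zp_decomp hp x hx
      obtain ⟨a, δ, hδ⟩ : ∃ (a : Fin 2) (δ : (ZMod (p^3))ˣ), δ^2 * ε = u^(a : ℕ) := by
        by_cases hε : IsSquare ε
        · obtain ⟨γ, hγ⟩ := hε
          exact ⟨0, γ⁻¹, by
            rw [hγ, show (((0 : Fin 2)) : ℕ) = 0 from rfl, pow_zero]; group⟩
        · obtain ⟨d, hd⟩ := hcoset ε u hε hu
          refine ⟨1, d, ?_⟩
          have : ε * (ε⁻¹ * u) = ε * (d * d) := by rw [hd]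
          rw [show ((1 : Fin 2) : ℕ) = 1 from rfl, pow_one]
          rw [show ε * (ε⁻¹ * u) = u by group] at this
          rw [this, pow_two]; exact mul_comm _ _
      set y : ZMod (p^3) := zrep p u (a, ⟨k, by omega⟩) with hy
      have hyx : y = ((δ : ZMod (p^3)))^2 * x := by
        rw [hy, hxe, zp_unit_act, zrep]
        simp only []
        rw [hδ]
      have hmem : y ∈ insert 0 (Finset.image (zrep p u) Finset.univ) :=
        Finset.mem_insert_of_mem (Finset.mem_image_of_mem _ (Finset.mem_univ _))
      refine ⟨y, ⟨hmem, δ, hyx⟩, ?_⟩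
      rintro y' ⟨hy'm, δ', hy'⟩
      have hy'e : y' = ((δ'^2 * ε : (ZMod (p^3))ˣ) : ZMod (p^3)) * (p : ZMod (p^3))^k := by
        rw [hy', hxe, zp_unit_act]
      have hy'ne : y' ≠ 0 := by rw [hy'e]; exact zp_rep_ne_zero hp _ hk2
      rcases Finset.mem_insert.1 hy'm with h0 | himg
      · exact absurd h0 hy'ne
      obtain ⟨q, -, hq⟩ := Finset.mem_image.1 himg
      -- y' = zrep p u q  and  y' = δ'^2 x,  y = δ^2 x
      have hrel : ((u^(q.1 : ℕ) : (ZMod (p^3))ˣ) : ZMod (p^3)) * (p : ZMod (p^3))^(q.2 : ℕ)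
          = (((δ' * δ⁻¹ : (ZMod (p^3))ˣ) : ZMod (p^3)))^2
            * (((u^(a : ℕ) : (ZMod (p^3))ˣ) : ZMod (p^3)) * (p : ZMod (p^3))^k) := by
        have hunit : (δ' * δ⁻¹)^2 * u^(a : ℕ) = δ'^2 * ε := by
          rw [← hδ]
          simp [mul_pow, inv_pow, mul_assoc, inv_mul_cancel_left]
        rw [zp_unit_act, hunit, ← hy'e, ← hq]
        rfl
      obtain ⟨h1, h2⟩ := zp_orb hp hodd u hu (by omega : (q.1 : ℕ) ≤ 1) (by omega : (a : ℕ) ≤ 1)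
        (by omega : (q.2 : ℕ) ≤ 2) hk2 (δ' * δ⁻¹) hrel
      rw [← hq, hy]
      show zrep p u q = zrep p u (a, ⟨k, by omega⟩)
      congr 1
      exact Prod.ext (Fin.ext h1) (Fin.ext h2)
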